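/- Let m > 1, L > 0, ν > 0, and let G ∈ C¹(ℝ) be even with G'(y) < 0 for all y > 0. Let ρ ∈ C²([0,L]) satisfy ρ(0) = 1, ρ'(0) = 0, ρ'(x) ≤ 0 on [0,L], with ρ' not identically zero, and suppose ν (m−1) ρ(x)^{m−2} ρ'(x) = ℋ_L[ρ'](x) for all x ∈ [0,L]. Then ν (m−1) ρ''(0) = ∫₀^L [G'(−y) − G'(y)] ρ'(y) dy, and consequently ρ''(0) < 0, i.e. ρ is locally concave at x = 0. -/

import Mathlib

open Set MeasureTheory

/-- The operator `ℋ_L[u](x) = ∫₀^L [G(x−y) − G(x+y)] u(y) dy`. -/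
noncomputable def Hop (G : ℝ → ℝ) (L : ℝ) (u : ℝ → ℝ) (x : ℝ) : ℝ :=
  ∫ y in (0:ℝ)..L, (G (x - y) - G (x + y)) * u y

/-- Local concavity of stationary states at the origin: if `ρ ∈ C²([0,L])` with
`ρ(0) = 1`, `ρ'(0) = 0`, `ρ' ≤ 0` not identically zero, solves the differentiated
stationary-state equation `ν (m−1) ρ^{m−2} ρ' = ℋ_L[ρ']`, and `G ∈ C¹(ℝ)` is even
with `G' < 0` on `(0,∞)`, then
`ν (m−1) ρ''(0) = ∫₀^L [G'(−y) − G'(y)] ρ'(y) dy` and `ρ''(0) < 0`. -/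
theorem locally_concave_at_origin
    (m L ν : ℝ) (hm : 1 < m) (hL : 0 < L) (hν : 0 < ν)
    (G : ℝ → ℝ) (hG : ContDiff ℝ 1 G) (hGeven : ∀ x, G (-x) = G x)
    (hG' : ∀ y : ℝ, 0 < y → deriv G y < 0)
    (ρ ρ' ρ'' : ℝ → ℝ)
    (hρ : ∀ x ∈ Icc (0:ℝ) L, HasDerivWithinAt ρ (ρ' x) (Icc 0 L) x)
    (hρ' : ∀ x ∈ Icc (0:ℝ) L, HasDerivWithinAt ρ' (ρ'' x) (Icc 0 L) x)
    (hρ''c : ContinuousOn ρ'' (Icc 0 L))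
    (hρ0 : ρ 0 = 1) (hρ'0 : ρ' 0 = 0)
    (hρ'np : ∀ x ∈ Icc (0:ℝ) L, ρ' x ≤ 0)
    (hρ'ne : ∃ x ∈ Icc (0:ℝ) L, ρ' x ≠ 0)
    (heq : ∀ x ∈ Icc (0:ℝ) L,
      ν * (m - 1) * ρ x ^ (m - 2) * ρ' x = Hop G L ρ' x) :
    ν * (m - 1) * ρ'' 0 = (∫ y in (0:ℝ)..L, (deriv G (-y) - deriv G y) * ρ' y) ∧
    ρ'' 0 < 0 := by
  have h0 : (0:ℝ) ∈ Icc (0:ℝ) L := ⟨le_rfl, hL.le⟩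
  have hρ'c : ContinuousOn ρ' (Icc 0 L) := fun x hx => (hρ' x hx).continuousWithinAt
  have hGc : Continuous G := hG.continuous
  have hG'c : Continuous (deriv G) := hG.continuous_deriv le_rfl
  have hGd : ∀ x : ℝ, HasDerivAt G (deriv G x) x :=
    fun x => (hG.differentiable one_ne_zero x).hasDerivAt
  -- deriv G is odd
  have hodd : ∀ x : ℝ, deriv G (-x) = -deriv G x := by
    intro x
    have h1 : HasDerivAt (fun y => G (-y)) (deriv G (-x) * (-1)) x :=
      (hGd (-x)).comp x (hasDerivAt_neg x)
    have h2 : (fun y : ℝ => G (-y)) = G := funext hGeven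
    rw [h2] at h1
    have := h1.deriv
    linarith [this]
  -- the uIoc is Ioc
  have hIoc : Set.uIoc (0:ℝ) L = Ioc (0:ℝ) L := uIoc_of_le hL.le
  -- bounds
  obtain ⟨M, hM⟩ := (isCompact_Icc (a := -(1+L)) (b := 1+L)).exists_bound_of_continuousOn
    hG'c.continuousOn
  obtain ⟨K, hK⟩ := (isCompact_Icc (a := (0:ℝ)) (b := L)).exists_bound_of_continuousOn hρ'c
  have hKnn : 0 ≤ K := le_trans (norm_nonneg _) (hK 0 h0)
  -- derivative of the integral at 0
  have key := intervalIntegral.hasDerivAt_integral_of_dominated_loc_of_deriv_le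
    (𝕜 := ℝ) (μ := volume) (a := 0) (b := L)
    (F := fun x y => (G (x - y) - G (x + y)) * ρ' y)
    (F' := fun x y => (deriv G (x - y) - deriv G (x + y)) * ρ' y)
    (x₀ := (0:ℝ)) (bound := fun _ => (M + M) * K) (Metric.ball_mem_nhds (0:ℝ) one_pos)
    (Filter.Eventually.of_forall (fun x => by
      apply ContinuousOn.aestronglyMeasurable _ measurableSet_uIoc
      exact (((hGc.comp (continuous_const.sub continuous_id)).sub
        (hGc.comp (continuous_const.add continuous_id))).continuousOn).mul
        ((hρ'c.mono Ioc_subset_Icc_self).mono (by rw [hIoc])))) 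
    (by
      apply ContinuousOn.intervalIntegrable
      rw [uIcc_of_le hL.le]
      exact (((hGc.comp (continuous_const.sub continuous_id)).sub
        (hGc.comp (continuous_const.add continuous_id))).continuousOn).mul hρ'c)
    (by
      apply ContinuousOn.aestronglyMeasurable _ measurableSet_uIoc
      exact (((hG'c.comp (continuous_const.sub continuous_id)).sub
        (hG'c.comp (continuous_const.add continuous_id))).continuousOn).mul
        ((hρ'c.mono Ioc_subset_Icc_self).mono (by rw [hIoc])))
    (Filter.Eventually.of_forall (fun t ht x hx => by
      rw [hIoc] at ht
      rw [Metric.mem_ball, Real.dist_eq, sub_zero] at hx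
      have ht1 : 0 < t := ht.1
      have ht2 : t ≤ L := ht.2
      have hb1 : ‖deriv G (x - t)‖ ≤ M := by
        apply hM
        constructor <;> [nlinarith [abs_lt.mp hx]; nlinarith [abs_lt.mp hx]]
      have hb2 : ‖deriv G (x + t)‖ ≤ M := by
        apply hM
        constructor <;> [nlinarith [abs_lt.mp hx]; nlinarith [abs_lt.mp hx]]
      have hb3 : ‖ρ' t‖ ≤ K := hK t ⟨ht1.le, ht2⟩
      calc ‖(deriv G (x - t) - deriv G (x + t)) * ρ' t‖
          = ‖deriv G (x - t) - deriv G (x + t)‖ * ‖ρ' t‖ := norm_mul _ _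
        _ ≤ (‖deriv G (x - t)‖ + ‖deriv G (x + t)‖) * ‖ρ' t‖ := by
            exact mul_le_mul_of_nonneg_right (norm_sub_le _ _) (norm_nonneg _)
        _ ≤ (M + M) * K := by
            apply mul_le_mul (add_le_add hb1 hb2) hb3 (norm_nonneg _)
            linarith [le_trans (norm_nonneg _) hb1]))
    (intervalIntegrable_const)
    (Filter.Eventually.of_forall (fun t ht x _ => by
      have h1 : HasDerivAt (fun x : ℝ => G (x - t)) (deriv G (x - t)) x := by
        simpa [Function.comp_def] using (hGd (x - t)).comp x ((hasDerivAt_id x).sub_const t)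
      have h2 : HasDerivAt (fun x : ℝ => G (x + t)) (deriv G (x + t)) x := by
        simpa [Function.comp_def] using (hGd (x + t)).comp x ((hasDerivAt_id x).add_const t)
      exact (h1.sub h2).mul_const (ρ' t)))
  have hHd : HasDerivAt (Hop G L ρ')
      (∫ y in (0:ℝ)..L, (deriv G (-y) - deriv G y) * ρ' y) 0 := by
    have := key.2
    simp only [zero_sub, zero_add] at this
    exact this
  -- derivative of the left side at 0 (within Icc)
  have hr : HasDerivWithinAt (fun x => ρ x ^ (m - 2))
      (ρ' 0 * (m - 2) * ρ 0 ^ (m - 2 - 1)) (Icc 0 L) 0 :=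
    (hρ 0 h0).rpow_const (Or.inl (by rw [hρ0]; norm_num))
  have hFd : HasDerivWithinAt (fun x => ν * (m - 1) * ρ x ^ (m - 2) * ρ' x)
      (ν * (m - 1) * ρ'' 0) (Icc 0 L) 0 := by
    have h := (hr.const_mul (ν * (m - 1))).mul (hρ' 0 h0)
    have hv : ν * (m - 1) * (ρ' 0 * (m - 2) * ρ 0 ^ (m - 2 - 1)) * ρ' 0 +
        ν * (m - 1) * ρ 0 ^ (m - 2) * ρ'' 0 = ν * (m - 1) * ρ'' 0 := by
      rw [hρ'0, hρ0, Real.one_rpow, Real.one_rpow]; ring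
    rw [hv] at h
    exact h
  -- the two derivatives agree by uniqueness
  have hu : UniqueDiffWithinAt ℝ (Icc (0:ℝ) L) 0 := uniqueDiffOn_Icc hL 0 h0
  have hHW : HasDerivWithinAt (fun x => ν * (m - 1) * ρ x ^ (m - 2) * ρ' x)
      (∫ y in (0:ℝ)..L, (deriv G (-y) - deriv G y) * ρ' y) (Icc 0 L) 0 :=
    (hHd.hasDerivWithinAt).congr (fun x hx => heq x hx) (heq 0 h0)
  have hmain : ν * (m - 1) * ρ'' 0 =
      ∫ y in (0:ℝ)..L, (deriv G (-y) - deriv G y) * ρ' y := by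
    rw [← hFd.derivWithin hu, ← hHW.derivWithin hu]
  -- negativity of the integral
  obtain ⟨g, hgdef⟩ : ∃ g : ℝ → ℝ,
      g = fun y => -((deriv G (-y) - deriv G y) * ρ' y) := ⟨_, rfl⟩
  have hgc : ContinuousOn g (Icc 0 L) := by
    rw [hgdef]
    apply ContinuousOn.neg
    exact (((hG'c.comp continuous_neg).sub hG'c).continuousOn).mul hρ'c
  have hgnn : ∀ y ∈ Ioc (0:ℝ) L, 0 ≤ g y := by
    intro y hy
    have h1 := hG' y hy.1
    have h2 := hρ'np y ⟨hy.1.le, hy.2⟩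
    have h3 := hodd y
    simp only [hgdef]
    nlinarith
  have hgint : IntegrableOn g (Ioc 0 L) := by
    exact (hgc.integrableOn_compact isCompact_Icc).mono_set Ioc_subset_Icc_self
  -- positivity of the integral of g
  obtain ⟨x₀, hx₀mem, hx₀ne⟩ := hρ'ne
  have hx₀neg : ρ' x₀ < 0 := lt_of_le_of_ne (hρ'np x₀ hx₀mem) hx₀ne
  have hx₀pos : 0 < x₀ := by
    rcases lt_or_eq_of_le hx₀mem.1 with h | h
    · exact h
    · exfalso; rw [← h, hρ'0] at hx₀ne; exact hx₀ne rfl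
  have hgx₀ : 0 < g x₀ := by
    have h1 := hG' x₀ hx₀pos
    have h3 := hodd x₀
    simp only [hgdef]
    nlinarith
  have hcw : ContinuousWithinAt g (Icc 0 L) x₀ := hgc x₀ hx₀mem
  have hev : {y | g x₀ / 2 < g y} ∈ nhdsWithin x₀ (Icc 0 L) :=
    hcw (Ioi_mem_nhds (half_lt_self hgx₀))
  rw [Metric.mem_nhdsWithin_iff] at hev
  obtain ⟨ε, hε, hball⟩ := hev
  set a : ℝ := max (x₀ - ε) (x₀ / 2) with ha
  have hax₀ : a < x₀ := by
    apply max_lt <;> linarith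
  have hsub : Ioo a x₀ ⊆ Function.support g ∩ Ioc 0 L := by
    intro y hy
    have hy1 : x₀ / 2 < y := lt_of_le_of_lt (le_max_right _ _) hy.1
    have hy2 : x₀ - ε < y := lt_of_le_of_lt (le_max_left _ _) hy.1
    have hyIcc : y ∈ Icc (0:ℝ) L := ⟨by linarith, le_trans hy.2.le hx₀mem.2⟩
    have hyball : y ∈ Metric.ball x₀ ε := by
      rw [Metric.mem_ball, Real.dist_eq, abs_lt]
      constructor <;> [linarith [hy.2]; linarith [hy.2]]
    have hgy : g x₀ / 2 < g y := hball ⟨hyball, hyIcc⟩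
    have hhalf : 0 < g x₀ / 2 := half_pos hgx₀
    refine ⟨fun hc => ?_, ⟨by linarith, hyIcc.2⟩⟩
    rw [hc] at hgy
    exact absurd hgy (by linarith)
  have hmeaspos : 0 < volume (Function.support g ∩ Ioc 0 L) := by
    calc (0:ENNReal) < volume (Ioo a x₀) := by
          rw [Real.volume_Ioo]
          simp only [ENNReal.ofReal_pos]
          linarith
      _ ≤ volume (Function.support g ∩ Ioc 0 L) := measure_mono hsub
  have hgae : 0 ≤ᵐ[volume.restrict (Ioc (0:ℝ) L)] g := by
    refine (ae_restrict_iff' measurableSet_Ioc).2 (Filter.Eventually.of_forall ?_)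
    intro y hy
    exact hgnn y hy
  have hintpos : 0 < ∫ y in Ioc (0:ℝ) L, g y :=
    (setIntegral_pos_iff_support_of_nonneg_ae hgae hgint).2 hmeaspos
  have hIlt : (∫ y in (0:ℝ)..L, (deriv G (-y) - deriv G y) * ρ' y) < 0 := by
    rw [intervalIntegral.integral_of_le hL.le]
    have hfg : (∫ y in Ioc (0:ℝ) L, (deriv G (-y) - deriv G y) * ρ' y)
        = -∫ y in Ioc (0:ℝ) L, g y := by
      rw [hgdef, ← integral_neg]
      simp
    rw [hfg]
    linarith
  refine ⟨hmain, ?_⟩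
  have hpos : 0 < ν * (m - 1) := by nlinarith
  have hlt : ν * (m - 1) * ρ'' 0 < 0 := by rw [hmain]; exact hIlt
  nlinarith
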